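/- (Lemma: new non-trivial stabilizers after a single-qubit measurement.) Apply the measurement-update rules for a single-qubit Pauli measurement M on qubit q with anticommuting generator K_a. Then for every subset c ⊆ {1,…,n} with a ∉ c: if S_c is trivial with respect to the original generators K₁,…,K_n and the updated stabilizer S_c' is non-trivial with respect to the updated generators K₁',…,K_n', then S_{c ∪ {a}} is non-trivial with respect to the original generators. Equivalently, every stabilizer that is newly non-trivial after the measurement is contained in the set { S_c : a ∉ c, S_{c∪{a}} non-trivial before the measurement }. -/

import Mathlib

open Matrix

noncomputable section

/-- Operators on the Hilbert space of qubits indexed by `ι`, as matrices. -/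
abbrev QOp (ι : Type*) := Matrix (ι → Fin 2) (ι → Fin 2) ℂ

def Xmat : Matrix (Fin 2) (Fin 2) ℂ := !![0, 1; 1, 0]
def Ymat : Matrix (Fin 2) (Fin 2) ℂ := !![0, -Complex.I; Complex.I, 0]
def Zmat : Matrix (Fin 2) (Fin 2) ℂ := !![1, 0; 0, -1]

/-- `P` is a 2×2 Pauli matrix (including the identity). -/
def IsPauliMat (P : Matrix (Fin 2) (Fin 2) ℂ) : Prop :=
  P = 1 ∨ P = Xmat ∨ P = Ymat ∨ P = Zmat

/-- `c` is an allowed Pauli phase. -/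
def IsPhase (c : ℂ) : Prop :=
  c = 1 ∨ c = -1 ∨ c = Complex.I ∨ c = -Complex.I

/-- The operator `c • P₀ ⊗ ⋯ ⊗ P_{n-1}` with entries `c * ∏ i, P i (a i) (b i)`. -/
def pauliTensor {ι : Type*} [Fintype ι] (c : ℂ)
    (P : ι → Matrix (Fin 2) (Fin 2) ℂ) : QOp ι :=
  Matrix.of fun a b => c * ∏ i, P i (a i) (b i)

/-- `A` is an n-qubit Pauli tensor. -/
def IsPauliTensor {ι : Type*} [Fintype ι] (A : QOp ι) : Prop :=
  ∃ (c : ℂ) (P : ι → Matrix (Fin 2) (Fin 2) ℂ),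
    IsPhase c ∧ (∀ i, IsPauliMat (P i)) ∧ A = pauliTensor c P

/-- `A` acts trivially on qubit `q`, i.e. `A = I_q ⊗ B`: entrywise, the `(x,y)` block
of `A` with respect to qubit `q` equals `δ_{x y}` times a fixed block. -/
def ActsTriviallyOn {ι : Type*} [DecidableEq ι] (A : QOp ι) (q : ι) : Prop :=
  ∀ (a b : ι → Fin 2) (x y : Fin 2),
    A (Function.update a q x) (Function.update b q y) =
      (if x = y then 1 else 0) * A (Function.update a q 0) (Function.update b q 0)

/-- The qubit support of an operator: those qubits on which it does not act trivially. -/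
def qsupp {ι : Type*} [DecidableEq ι] (A : QOp ι) : Set ι :=
  {q | ¬ ActsTriviallyOn A q}

/-- Ordered product `∏_{i ∈ c} f i` taken in increasing index order. -/
def finOProd {m : ℕ} {α : Type*} [Monoid α] (c : Finset (Fin m)) (f : Fin m → α) : α :=
  ((c.sort (· ≤ ·)).map f).prod

/-- The stabilizer `S_c = ∏_{i ∈ c} K i` (in increasing index order). -/
def stabProd {n : ℕ} (K : Fin n → QOp (Fin n)) (c : Finset (Fin n)) : QOp (Fin n) :=
  finOProd c K

/-- The stabilizer `S_c` is trivial with respect to the generators `K`. -/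
def IsTrivial {n : ℕ} (K : Fin n → QOp (Fin n)) (c : Finset (Fin n)) : Prop :=
  ∃ α β : Finset (Fin n), α.Nonempty ∧ β.Nonempty ∧ Disjoint α β ∧ α ∪ β = c ∧
    qsupp (stabProd K α) ∩ qsupp (stabProd K β) = ∅

/-- The single-qubit operator `u` acting on qubit `q` (identity elsewhere). -/
def embed1 {ι : Type*} [Fintype ι] [DecidableEq ι]
    (u : Matrix (Fin 2) (Fin 2) ℂ) (q : ι) : QOp ι :=
  Matrix.of fun a b =>
    u (a q) (b q) * ∏ i ∈ Finset.univ.erase q, (if a i = b i then (1 : ℂ) else 0)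

/-- The controlled-Z gate on qubits `u` and `v`. -/
def CZop {ι : Type*} [Fintype ι] [DecidableEq ι] (u v : ι) : QOp ι :=
  Matrix.diagonal fun a => if a u = 1 ∧ a v = 1 then (-1 : ℂ) else 1

def XZmat : Matrix (Fin 2) (Fin 2) ℂ := !![0, -1; 1, 0]
abbrev V2 := ZMod 2 × ZMod 2
def sigmaP : V2 → Matrix (Fin 2) (Fin 2) ℂ := fun u =>
  if u.1 = 0 then (if u.2 = 0 then 1 else Zmat) else (if u.2 = 0 then Xmat else XZmat)
def sgn : ZMod 2 → ℂ := fun t => if t = 0 then 1 else -1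
lemma z2cases (x : ZMod 2) : x = 0 ∨ x = 1 := by revert x; decide
lemma sgn_ne_zero (t : ZMod 2) : sgn t ≠ 0 := by
  rcases z2cases t with rfl | rfl <;> norm_num [sgn]
lemma sgn_zero : sgn 0 = 1 := by norm_num [sgn]
lemma sgn_add (s t : ZMod 2) : sgn (s + t) = sgn s * sgn t := by
  rcases z2cases s with rfl | rfl <;> rcases z2cases t with rfl | rfl <;>
    simp [sgn, show (1+1 : ZMod 2) = 0 from by decide, show (1 : ZMod 2) ≠ 0 from by decide]
lemma sgn_mul_self (t : ZMod 2) : sgn t * sgn t = 1 := by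
  rcases z2cases t with rfl | rfl <;> norm_num [sgn]
lemma sigma_mul (u v : V2) : sigmaP u * sigmaP v = sgn (u.2 * v.1) • sigmaP (u + v) := by
  obtain ⟨u1, u2⟩ := u
  obtain ⟨v1, v2⟩ := v
  rcases z2cases u1 with rfl | rfl <;> rcases z2cases u2 with rfl | rfl <;>
    rcases z2cases v1 with rfl | rfl <;> rcases z2cases v2 with rfl | rfl <;>
  · ext i j
    fin_cases i <;> fin_cases j <;>
      simp [sigmaP, sgn, Xmat, Zmat, XZmat, Matrix.mul_apply, Fin.sum_univ_two,
        Matrix.one_apply, Prod.mk_add_mk, Matrix.smul_apply, smul_eq_mul,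
        show (1+1 : ZMod 2) = 0 from by decide, show (1 : ZMod 2) ≠ 0 from by decide,
        show (0:ZMod 2) * 1 = 0 from by decide, show (1:ZMod 2) * 1 = 1 from by decide]


lemma sigma_zero : sigmaP 0 = 1 := by simp [sigmaP]

lemma sigma_row_entry (u : V2) : ∃ y, sigmaP u 0 y ≠ 0 := by
  obtain ⟨u1, u2⟩ := u
  rcases z2cases u1 with rfl | rfl <;> rcases z2cases u2 with rfl | rfl
  · exact ⟨0, by norm_num [sigmaP, Matrix.one_apply]⟩
  · exact ⟨0, by norm_num [sigmaP, Zmat, show (1 : ZMod 2) ≠ 0 from by decide]⟩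
  · exact ⟨1, by norm_num [sigmaP, Xmat, show (1 : ZMod 2) ≠ 0 from by decide]⟩
  · exact ⟨1, by norm_num [sigmaP, XZmat, show (1 : ZMod 2) ≠ 0 from by decide]⟩

lemma sigma_nontriv (u : V2) (hu : u ≠ 0) :
    ∃ x y, sigmaP u x y ≠ (if x = y then (1:ℂ) else 0) * sigmaP u 0 0 := by
  obtain ⟨u1, u2⟩ := u
  rcases z2cases u1 with rfl | rfl <;> rcases z2cases u2 with rfl | rfl
  · exact absurd rfl hu
  · exact ⟨1, 1, by norm_num [sigmaP, Zmat, show (1 : ZMod 2) ≠ 0 from by decide]⟩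
  · exact ⟨0, 1, by norm_num [sigmaP, Xmat, show (1 : ZMod 2) ≠ 0 from by decide]⟩
  · exact ⟨0, 1, by norm_num [sigmaP, XZmat, show (1 : ZMod 2) ≠ 0 from by decide]⟩

variable {ι : Type*} [Fintype ι] [DecidableEq ι]

/-- The normalized Pauli tensor attached to a vector of `V2` data. -/
def PT (P : ι → V2) : QOp ι := Matrix.of fun a b => ∏ i, sigmaP (P i) (a i) (b i)

def PRep (A : QOp ι) (P : ι → V2) : Prop := ∃ c : ℂ, c ≠ 0 ∧ A = c • PT P

lemma PT_zero : (PT (0 : ι → V2)) = 1 := by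
  ext a b
  simp only [PT, Matrix.of_apply, Pi.zero_apply, sigma_zero, Matrix.one_apply]
  by_cases h : a = b
  · subst h; simp [Matrix.one_apply]
  · obtain ⟨j, hj⟩ := Function.ne_iff.mp h
    rw [if_neg h]
    exact Finset.prod_eq_zero (Finset.mem_univ j) (by simp [Matrix.one_apply, hj])

lemma PT_mul (P Q : ι → V2) :
    PT P * PT Q = (∏ i, sgn ((P i).2 * (Q i).1)) • PT (P + Q) := by
  ext a b
  simp only [Matrix.mul_apply, PT, Matrix.of_apply, Matrix.smul_apply, smul_eq_mul]
  have h1 : ∀ j : ι → Fin 2,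
      (∏ i, sigmaP (P i) (a i) (j i)) * ∏ i, sigmaP (Q i) (j i) (b i)
        = ∏ i, (sigmaP (P i) (a i) (j i) * sigmaP (Q i) (j i) (b i)) := fun j =>
    (Finset.prod_mul_distrib).symm
  simp only [h1]
  rw [← Fintype.piFinset_univ]
  have h3 := Finset.prod_univ_sum (t := fun _ : ι => (Finset.univ : Finset (Fin 2)))
    (f := fun i v => sigmaP (P i) (a i) v * sigmaP (Q i) v (b i))
  rw [← h3]
  have h2 : ∀ i, (∑ x : Fin 2, sigmaP (P i) (a i) x * sigmaP (Q i) x (b i))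
      = (sigmaP (P i) * sigmaP (Q i)) (a i) (b i) := fun i => (Matrix.mul_apply).symm
  simp only [h2, sigma_mul, Matrix.smul_apply, smul_eq_mul, Pi.add_apply]
  rw [Finset.prod_mul_distrib]

lemma PT_ne_zero (P : ι → V2) : PT P ≠ 0 := by
  intro h
  choose y hy using fun i => sigma_row_entry (P i)
  have : PT P (fun _ => 0) (fun i => y i) = 0 := by rw [h]; rfl
  rw [PT, Matrix.of_apply] at this
  exact (Finset.prod_ne_zero_iff.mpr fun i _ => hy i) this

lemma PRep.ne_zero {A : QOp ι} {P : ι → V2} (h : PRep A P) : A ≠ 0 := by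
  obtain ⟨c, hc, rfl⟩ := h
  simp only [ne_eq, smul_eq_zero, not_or]
  exact ⟨hc, PT_ne_zero P⟩

lemma PRep.mul {A B : QOp ι} {P Q : ι → V2} (hA : PRep A P) (hB : PRep B Q) :
    PRep (A * B) (P + Q) := by
  obtain ⟨c, hc, rfl⟩ := hA
  obtain ⟨d, hd, rfl⟩ := hB
  refine ⟨c * d * ∏ i, sgn ((P i).2 * (Q i).1), ?_, ?_⟩
  · exact mul_ne_zero (mul_ne_zero hc hd) (Finset.prod_ne_zero_iff.mpr fun i _ => sgn_ne_zero _)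
  · rw [smul_mul_assoc, mul_smul_comm, smul_smul, PT_mul, smul_smul, mul_assoc]

lemma PRep.one : PRep (1 : QOp ι) 0 := ⟨1, one_ne_zero, by rw [PT_zero, one_smul]⟩

set_option linter.unusedSectionVars false

lemma isPauliMat_rep {P : Matrix (Fin 2) (Fin 2) ℂ} (h : IsPauliMat P) :
    ∃ (d : ℂ) (u : V2), d ≠ 0 ∧ P = d • sigmaP u := by
  rcases h with rfl | rfl | rfl | rfl
  · exact ⟨1, 0, one_ne_zero, by rw [sigma_zero, one_smul]⟩
  · exact ⟨1, (1, 0), one_ne_zero, by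
      rw [one_smul]; simp [sigmaP, show (1 : ZMod 2) ≠ 0 from by decide]⟩
  · refine ⟨Complex.I, (1, 1), Complex.I_ne_zero, ?_⟩
    have : sigmaP (1, 1) = XZmat := by
      simp [sigmaP, show (1 : ZMod 2) ≠ 0 from by decide]
    rw [this]
    ext i j
    fin_cases i <;> fin_cases j <;>
      simp [Ymat, XZmat, Complex.ext_iff]
  · exact ⟨1, (0, 1), one_ne_zero, by
      rw [one_smul]; simp [sigmaP, show (1 : ZMod 2) ≠ 0 from by decide]⟩

lemma isPhase_ne_zero {c : ℂ} (h : IsPhase c) : c ≠ 0 := by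
  rcases h with rfl | rfl | rfl | rfl <;> simp [Complex.I_ne_zero]

lemma isPauliTensor_rep {A : QOp ι} (h : IsPauliTensor A) : ∃ P : ι → V2, PRep A P := by
  obtain ⟨c, P, hc, hP, rfl⟩ := h
  choose d u hd hu using fun i => isPauliMat_rep (hP i)
  refine ⟨u, c * ∏ i, d i,
    mul_ne_zero (isPhase_ne_zero hc) (Finset.prod_ne_zero_iff.mpr fun i _ => hd i), ?_⟩
  ext a b
  simp only [pauliTensor, Matrix.of_apply, Matrix.smul_apply, PT, smul_eq_mul]
  have : ∀ i, P i (a i) (b i) = d i * sigmaP (u i) (a i) (b i) := fun i => by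
    rw [hu i, Matrix.smul_apply, smul_eq_mul]
  rw [Finset.prod_congr rfl fun i _ => this i, Finset.prod_mul_distrib]
  ring

lemma PT_entry_split (c : ℂ) (P : ι → V2) (q : ι) (a b : ι → Fin 2) (x y : Fin 2) :
    (c • PT P) (Function.update a q x) (Function.update b q y)
      = c * sigmaP (P q) x y * ∏ i ∈ ({q}ᶜ : Finset ι), sigmaP (P i) (a i) (b i) := by
  simp only [Matrix.smul_apply, PT, Matrix.of_apply, smul_eq_mul]
  rw [Fintype.prod_eq_mul_prod_compl q]
  rw [Function.update_self, Function.update_self]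
  rw [Finset.prod_congr rfl fun i hi => by
    rw [Function.update_of_ne (Finset.mem_compl.mp hi ∘ Finset.mem_singleton.mpr) x a,
        Function.update_of_ne (Finset.mem_compl.mp hi ∘ Finset.mem_singleton.mpr) y b]]
  ring

lemma PRep.actsTrivially_iff {A : QOp ι} {P : ι → V2} (h : PRep A P) (q : ι) :
    ActsTriviallyOn A q ↔ P q = 0 := by
  obtain ⟨c, hc, rfl⟩ := h
  constructor
  · intro htriv
    by_contra hPq
    obtain ⟨x, y, hxy⟩ := sigma_nontriv (P q) hPq
    choose yy hyy using fun i => sigma_row_entry (P i)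
    have key := htriv (fun _ => 0) yy x y
    rw [PT_entry_split, PT_entry_split] at key
    set R := ∏ i ∈ ({q}ᶜ : Finset ι), sigmaP (P i) ((fun _ => (0 : Fin 2)) i) (yy i) with hR
    have hRne : R ≠ 0 := Finset.prod_ne_zero_iff.mpr fun i _ => hyy i
    apply hxy
    have key2 : sigmaP (P q) x y * (c * R)
        = ((if x = y then (1:ℂ) else 0) * sigmaP (P q) 0 0) * (c * R) := by
      rw [← mul_assoc, ← mul_assoc]
      calc sigmaP (P q) x y * c * R = c * sigmaP (P q) x y * R := by ring
        _ = (if x = y then (1:ℂ) else 0) * (c * sigmaP (P q) 0 0 * R) := key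
        _ = (if x = y then (1:ℂ) else 0) * sigmaP (P q) 0 0 * c * R := by ring
    exact mul_right_cancel₀ (mul_ne_zero hc hRne) key2
  · intro hPq a b x y
    rw [PT_entry_split, PT_entry_split, hPq, sigma_zero]
    simp only [Matrix.one_apply, if_pos rfl]
    split <;> simp <;> ring_nf


lemma PRep.qsupp_eq {A : QOp ι} {P : ι → V2} (h : PRep A P) :
    qsupp A = {j | P j ≠ 0} := by
  ext j
  simp only [qsupp, Set.mem_setOf_eq, h.actsTrivially_iff j]

lemma sgn_one : sgn 1 = -1 := by
  simp [sgn, show (1 : ZMod 2) ≠ 0 from by decide]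

lemma sgn_sum {κ : Type*} (s : Finset κ) (f : κ → ZMod 2) :
    sgn (∑ i ∈ s, f i) = ∏ i ∈ s, sgn (f i) := by
  classical
  induction s using Finset.induction_on with
  | empty => simp [sgn_zero]
  | insert k s' hnot ih =>
                      rw [Finset.sum_insert hnot, Finset.prod_insert hnot, sgn_add, ih]

lemma PRep.comm_rel {A B : QOp ι} {P Q : ι → V2} (hA : PRep A P) (hB : PRep B Q) :
    A * B = sgn (∑ i, ((P i).2 * (Q i).1 + (P i).1 * (Q i).2)) • (B * A) := by
  obtain ⟨c, hc, rfl⟩ := hA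
  obtain ⟨d, hd, rfl⟩ := hB
  have hL : (c • PT P) * (d • PT Q)
      = (c * d * ∏ i, sgn ((P i).2 * (Q i).1)) • PT (P + Q) := by
    rw [smul_mul_assoc, mul_smul_comm, PT_mul, smul_smul, smul_smul, mul_assoc]
  have hR : (d • PT Q) * (c • PT P)
      = (d * c * ∏ i, sgn ((Q i).2 * (P i).1)) • PT (P + Q) := by
    rw [smul_mul_assoc, mul_smul_comm, PT_mul, smul_smul, smul_smul, mul_assoc,
      show Q + P = P + Q from add_comm Q P]
  rw [hL, hR, smul_smul]
  congr 1
  rw [sgn_sum]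
  have key : ∀ i, sgn ((P i).2 * (Q i).1)
      = sgn ((P i).2 * (Q i).1 + (P i).1 * (Q i).2) * sgn ((Q i).2 * (P i).1) := by
    intro i
    rw [sgn_add, mul_assoc, mul_comm ((Q i).2) ((P i).1), sgn_mul_self, mul_one]
  rw [Finset.prod_congr rfl fun i _ => key i, Finset.prod_mul_distrib]
  ring

def omg (u v : V2) : ZMod 2 := u.2 * v.1 + u.1 * v.2

lemma omg_add (m u v : V2) : omg m (u + v) = omg m u + omg m v := by
  simp only [omg, Prod.fst_add, Prod.snd_add]
  ring

lemma omg_zero_right (m : V2) : omg m 0 = 0 := by simp [omg]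

lemma omg_zero_cases (m v : V2) (hm : m ≠ 0) (h : omg m v = 0) : v = 0 ∨ v = m := by
  revert hm h; revert m v; decide

lemma omg_one_ne_zero (m v : V2) (h : omg m v = 1) : v ≠ 0 := by
  revert h; revert m v; decide

lemma v2_add_self (v : V2) : v + v = 0 := by
  revert v; decide

lemma one_add_one_z2 : (1 + 1 : ZMod 2) = 0 := by decide

lemma omg_sum {κ : Type*} (m : V2) (s : Finset κ) (f : κ → V2) :
    omg m (∑ i ∈ s, f i) = ∑ i ∈ s, omg m (f i) := by
  classical
  induction s using Finset.induction_on with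
  | empty => simp [omg_zero_right]
  | insert k s' hnot ih =>
                      rw [Finset.sum_insert hnot, Finset.sum_insert hnot, omg_add, ih]

lemma mu_localize {q : ι} (μ : ι → V2) (hμ : ∀ j, j ≠ q → μ j = 0) (P : ι → V2) :
    (∑ i, ((μ i).2 * (P i).1 + (μ i).1 * (P i).2)) = omg (μ q) (P q) := by
  rw [Finset.sum_eq_single q]
  · rfl
  · intro j _ hj
    rw [hμ j hj]
    simp
  · intro h
    exact absurd (Finset.mem_univ q) h

lemma prep_list_prod {n : ℕ} (K : Fin n → QOp (Fin n)) (p : Fin n → (Fin n → V2)) :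
    ∀ l : List (Fin n), (∀ i ∈ l, PRep (K i) (p i)) →
      PRep ((l.map K).prod) ((l.map p).sum)
  | [], _ => by simpa using PRep.one
  | (i :: l), h => by
      simp only [List.map_cons, List.prod_cons, List.sum_cons]
      exact (h i List.mem_cons_self).mul
        (prep_list_prod K p l fun j hj => h j (List.mem_cons_of_mem _ hj))

lemma prep_stabProd {n : ℕ} (K : Fin n → QOp (Fin n)) (p : Fin n → (Fin n → V2))
    (c : Finset (Fin n)) (h : ∀ i ∈ c, PRep (K i) (p i)) :
    PRep (stabProd K c) (∑ i ∈ c, p i) := by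
  have h1 := prep_list_prod K p (c.sort (· ≤ ·))
    (fun i hi => h i ((Finset.mem_sort (· ≤ ·)).mp hi))
  have h2 : ((c.sort (· ≤ ·)).map p).sum = ∑ i ∈ c, p i := by
    rw [List.Perm.sum_eq (List.Perm.map p (Finset.sort_perm_toList (s := c) (r := (· ≤ ·)))),
      Finset.sum_map_toList]
  rw [stabProd, finOProd]
  rwa [h2] at h1

lemma prep_disjoint_iff {A B : QOp ι} {P Q : ι → V2} (hA : PRep A P) (hB : PRep B Q) :
    qsupp A ∩ qsupp B = ∅ ↔ ∀ j, P j = 0 ∨ Q j = 0 := by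
  rw [hA.qsupp_eq, hB.qsupp_eq, Set.eq_empty_iff_forall_notMem]
  constructor
  · intro h j
    by_contra hj
    push_neg at hj
    exact h j ⟨hj.1, hj.2⟩
  · intro h j hj
    rcases h j with h0 | h0
    · exact hj.1 h0
    · exact hj.2 h0

/-- (New non-trivial stabilizers after a single-qubit measurement.)
Under the measurement-update rules for a single-qubit Pauli measurement `M` on qubit `q`
with anticommuting generator `K a`: for every combination `c` with `a ∉ c`, if `S_c` is
trivial w.r.t. the original generators but `S_c'` is non-trivial w.r.t. the updated
generators, then `S_{c ∪ {a}}` is non-trivial w.r.t. the original generators. -/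
theorem newly_nontrivial_after_measurement {n : ℕ}
    (K : Fin n → QOp (Fin n)) (hPauli : ∀ i, IsPauliTensor (K i))
    (hcomm : ∀ i j, Commute (K i) (K j))
    (hherm : ∀ i, (K i)ᴴ = K i) (hsq : ∀ i, K i * K i = 1)
    (M : QOp (Fin n)) (hM : IsPauliTensor M) (hMherm : Mᴴ = M) (hMsq : M * M = 1)
    (q : Fin n) (hMsupp : qsupp M = {q})
    (a : Fin n) (hanti : M * K a = -(K a * M))
    (K' : Fin n → QOp (Fin n))
    (hK'a : K' a = M)
    (hK'1 : ∀ i, i ≠ a → M * K i = -(K i * M) → q ∈ qsupp (M * K a * K i) →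
      K' i = K a * K i)
    (hK'2 : ∀ i, i ≠ a → M * K i = -(K i * M) → q ∉ qsupp (M * K a * K i) →
      K' i = M * (K a * K i))
    (hK'3 : ∀ i, i ≠ a → M * K i = K i * M → q ∈ qsupp (M * K i) →
      K' i = K i)
    (hK'4 : ∀ i, i ≠ a → M * K i = K i * M → q ∉ qsupp (M * K i) →
      K' i = M * K i) :
    ∀ c : Finset (Fin n), a ∉ c →
      IsTrivial K c → ¬ IsTrivial K' c → ¬ IsTrivial K (insert a c) := by
  intro c hac htriv hnt hins
  apply hnt
  -- representations of the generators and of M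
  obtain ⟨μ, hμrep⟩ := isPauliTensor_rep hM
  choose p hp using fun i => isPauliTensor_rep (hPauli i)
  -- structure of μ
  have hμsupp : {j | μ j ≠ 0} = ({q} : Set (Fin n)) := by
    rw [← hμrep.qsupp_eq]; exact hMsupp
  have hmq : μ q ≠ 0 := by
    have : q ∈ {j | μ j ≠ 0} := by rw [hμsupp]; rfl
    exact this
  have hμoff : ∀ j, j ≠ q → μ j = 0 := by
    intro j hj
    by_contra h
    have : j ∈ ({q} : Set (Fin n)) := by rw [← hμsupp]; exact h
    exact hj this
  -- commutation relation between M and each K i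
  have hti_rel : ∀ i, M * K i = sgn (omg (μ q) (p i q)) • (K i * M) := by
    intro i
    have h1 := hμrep.comm_rel (hp i)
    rwa [mu_localize μ hμoff (p i)] at h1
  -- K a anticommutes with M: omega value is 1
  have hta : omg (μ q) (p a q) = 1 := by
    rcases z2cases (omg (μ q) (p a q)) with h0 | h1
    · exfalso
      have h2 := hti_rel a
      rw [h0, sgn_zero, one_smul, hanti] at h2
      have h3 : K a * M = 0 := by
        have h4 : K a * M + K a * M = 0 := by
          nth_rewrite 1 [← h2]
          exact neg_add_cancel _
        have h5 : (2 : ℂ) • (K a * M) = 0 := by rw [two_smul]; exact h4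
        exact (smul_eq_zero.mp h5).resolve_left (by norm_num)
      exact ((hp a).mul hμrep).ne_zero h3
    · exact h1
  -- the update data
  have hupd : ∀ i : Fin n, ∃ R : Fin n → V2,
      i ∈ c → (PRep (K' i) R ∧ R q = 0 ∧
        ∀ j, j ≠ q → R j = p i j + omg (μ q) (p i q) • p a j) := by
    intro i
    by_cases hic : i ∈ c
    swap
    · exact ⟨0, fun h => absurd h hic⟩
    have hia : i ≠ a := fun h => hac (h ▸ hic)
    rcases z2cases (omg (μ q) (p i q)) with h0 | h1
    · -- commuting case
      have hcommi : M * K i = K i * M := by rw [hti_rel i, h0, sgn_zero, one_smul]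
      have hMKi : PRep (M * K i) (μ + p i) := hμrep.mul (hp i)
      by_cases hq : q ∈ qsupp (M * K i)
      · have hKi' := hK'3 i hia hcommi hq
        refine ⟨p i, fun _ => ⟨hKi' ▸ hp i, ?_, fun j hj => by
          rw [h0, zero_smul, add_zero]⟩⟩
        have hne : (μ + p i) q ≠ 0 := by
          rw [hMKi.qsupp_eq] at hq; exact hq
        rcases omg_zero_cases (μ q) (p i q) hmq h0 with h | h
        · exact h
        · exact absurd (by rw [Pi.add_apply, h, v2_add_self]) hne
      · have hKi' := hK'4 i hia hcommi hq
        have hzero : (μ + p i) q = 0 := by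
          rw [hMKi.qsupp_eq] at hq
          simpa using hq
        exact ⟨μ + p i, fun _ => ⟨hKi' ▸ hMKi, hzero, fun j hj => by
          rw [h0, zero_smul, add_zero, Pi.add_apply, hμoff j hj, zero_add]⟩⟩
    · -- anticommuting case
      have hantii : M * K i = -(K i * M) := by
        rw [hti_rel i, h1, sgn_one, neg_smul, one_smul]
      have hMKaKi : PRep (M * K a * K i) (μ + p a + p i) := (hμrep.mul (hp a)).mul (hp i)
      by_cases hq : q ∈ qsupp (M * K a * K i)
      · have hKi' := hK'1 i hia hantii hq
        refine ⟨p a + p i, fun _ => ⟨hKi' ▸ ((hp a).mul (hp i)), ?_, fun j hj => by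
          rw [h1, one_smul, Pi.add_apply, add_comm]⟩⟩
        have hne : (μ + p a + p i) q ≠ 0 := by
          rw [hMKaKi.qsupp_eq] at hq; exact hq
        have h2 : omg (μ q) ((p a + p i) q) = 0 := by
          rw [Pi.add_apply, omg_add, hta, h1, one_add_one_z2]
        rcases omg_zero_cases (μ q) ((p a + p i) q) hmq h2 with h | h
        · exact h
        · exact absurd (by
            rw [Pi.add_apply, Pi.add_apply]
            rw [Pi.add_apply] at h
            rw [add_assoc, show p a q + p i q = μ q from h, v2_add_self]) hne
      · have hKi' := hK'2 i hia hantii hq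
        have hzero : (μ + p a + p i) q = 0 := by
          rw [hMKaKi.qsupp_eq] at hq
          simpa using hq
        refine ⟨μ + (p a + p i), fun _ => ⟨hKi' ▸ (hμrep.mul ((hp a).mul (hp i))), ?_,
          fun j hj => by
            rw [h1, one_smul, Pi.add_apply, Pi.add_apply, hμoff j hj, zero_add, add_comm]⟩⟩
        rw [← add_assoc]
        exact hzero
  choose R hR using hupd
  -- summed facts
  have hRq : ∀ γ' : Finset (Fin n), γ' ⊆ c → (∑ i ∈ γ', R i) q = 0 := by
    intro γ' hsub
    rw [Finset.sum_apply]
    exact Finset.sum_eq_zero fun i hi => (hR i (hsub hi)).2.1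
  have hRoff : ∀ γ' : Finset (Fin n), γ' ⊆ c → ∀ j, j ≠ q →
      (∑ i ∈ γ', R i) j = (∑ i ∈ γ', p i) j
        + omg (μ q) ((∑ i ∈ γ', p i) q) • p a j := by
    intro γ' hsub j hj
    rw [Finset.sum_apply, Finset.sum_apply, Finset.sum_apply, omg_sum,
      Finset.sum_congr rfl (fun i hi => (hR i (hsub hi)).2.2 j hj),
      Finset.sum_add_distrib, ← Finset.sum_smul]
  have hrepS' : ∀ γ' : Finset (Fin n), γ' ⊆ c → PRep (stabProd K' γ') (∑ i ∈ γ', R i) :=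
    fun γ' h => prep_stabProd K' R γ' (fun i hi => (hR i (h hi)).1)
  have hrepS : ∀ γ' : Finset (Fin n), PRep (stabProd K γ') (∑ i ∈ γ', p i) :=
    fun γ' => prep_stabProd K p γ' (fun i _ => hp i)
  -- unpack the two given trivial decompositions
  obtain ⟨γ, δ, hγne, hδne, hγδdis, hγδun, hγδsupp⟩ := htriv
  obtain ⟨α, β, hαne, hβne, hαβdis, hαβun, hαβsupp⟩ := hins
  have hPQ : ∀ j, (∑ i ∈ γ, p i) j = 0 ∨ (∑ i ∈ δ, p i) j = 0 :=
    (prep_disjoint_iff (hrepS γ) (hrepS δ)).mp hγδsupp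
  have hABfwd : ∀ j, (∑ i ∈ α, p i) j = 0 ∨ (∑ i ∈ β, p i) j = 0 :=
    (prep_disjoint_iff (hrepS α) (hrepS β)).mp hαβsupp
  have hsubγ : γ ⊆ c := by rw [← hγδun]; exact Finset.subset_union_left
  have hsubδ : δ ⊆ c := by rw [← hγδun]; exact Finset.subset_union_right
  by_cases h0 : omg (μ q) ((∑ i ∈ γ, p i) q) = 0 ∧ omg (μ q) ((∑ i ∈ δ, p i) q) = 0
  · refine ⟨γ, δ, hγne, hδne, hγδdis, hγδun, ?_⟩
    apply (prep_disjoint_iff (hrepS' γ hsubγ) (hrepS' δ hsubδ)).mpr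
    intro j
    by_cases hj : j = q
    · subst hj; left; exact hRq γ hsubγ
    · rw [hRoff γ hsubγ j hj, hRoff δ hsubδ j hj, h0.1, h0.2, zero_smul, add_zero, add_zero]
      exact hPQ j
  · -- total omega over c is 1
    have htc : omg (μ q) ((∑ i ∈ c, p i) q) = 1 := by
      have hsum : (∑ i ∈ c, p i) = (∑ i ∈ γ, p i) + (∑ i ∈ δ, p i) := by
        rw [← hγδun, Finset.sum_union hγδdis]
      rw [hsum, Pi.add_apply, omg_add]
      rcases z2cases (omg (μ q) ((∑ i ∈ γ, p i) q)) with hγ0 | hγ1 <;>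
        rcases z2cases (omg (μ q) ((∑ i ∈ δ, p i) q)) with hδ0 | hδ1
      · exact absurd ⟨hγ0, hδ0⟩ h0
      · rw [hγ0, hδ1, zero_add]
      · rw [hγ1, hδ0, add_zero]
      · exfalso
        rcases hPQ q with h | h
        · exact omg_one_ne_zero _ _ hγ1 h
        · exact omg_one_ne_zero _ _ hδ1 h
    -- the final construction, symmetric in the roles of α and β
    have finalcase : ∀ α' β' : Finset (Fin n), β'.Nonempty → Disjoint α' β' →
        α' ∪ β' = insert a c → a ∈ α' →
        (∀ j, (∑ i ∈ α', p i) j = 0 ∨ (∑ i ∈ β', p i) j = 0) → IsTrivial K' c := by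
      intro α β hβne hdis hun haα hsupp
      have haβ : a ∉ β := Finset.disjoint_left.mp hdis haα
      have hunc : α.erase a ∪ β = c := by
        ext j
        have h1 : j ∈ α ∪ β ↔ j ∈ insert a c := by rw [hun]
        simp only [Finset.mem_union, Finset.mem_erase, Finset.mem_insert] at h1 ⊢
        constructor
        · rintro (⟨hja, hjα⟩ | hjβ)
          · exact (h1.mp (Or.inl hjα)).resolve_left hja
          · exact (h1.mp (Or.inr hjβ)).resolve_left (fun h => haβ (h ▸ hjβ))
        · intro hjc
          have hja : j ≠ a := fun h => hac (h ▸ hjc)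
          rcases h1.mpr (Or.inr hjc) with h | h
          · exact Or.inl ⟨hja, h⟩
          · exact Or.inr h
      have hsubα' : α.erase a ⊆ c := by rw [← hunc]; exact Finset.subset_union_left
      have hsubβ : β ⊆ c := by rw [← hunc]; exact Finset.subset_union_right
      have hdisα' : Disjoint (α.erase a) β := hdis.mono_left (Finset.erase_subset a α)
      have hαsum : (∑ i ∈ α, p i) = p a + ∑ i ∈ α.erase a, p i :=
        (Finset.add_sum_erase α p haα).symm
      have htα'β : omg (μ q) ((∑ i ∈ α.erase a, p i) q)
          + omg (μ q) ((∑ i ∈ β, p i) q) = 1 := by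
        have hs : (∑ i ∈ c, p i) = (∑ i ∈ α.erase a, p i) + (∑ i ∈ β, p i) := by
          rw [← hunc, Finset.sum_union hdisα']
        rw [hs, Pi.add_apply, omg_add] at htc
        exact htc
      have htα' : omg (μ q) ((∑ i ∈ α.erase a, p i) q) = 1 := by
        rcases z2cases (omg (μ q) ((∑ i ∈ α.erase a, p i) q)) with h | h
        · exfalso
          have htβ : omg (μ q) ((∑ i ∈ β, p i) q) = 1 := by
            rw [h, zero_add] at htα'β; exact htα'β
          have hβq : (∑ i ∈ β, p i) q ≠ 0 := omg_one_ne_zero _ _ htβ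
          have hαq : (∑ i ∈ α, p i) q = 0 := (hsupp q).resolve_right hβq
          have h2 : omg (μ q) ((∑ i ∈ α, p i) q) = 0 := by
            rw [hαq, omg_zero_right]
          rw [hαsum, Pi.add_apply, omg_add, hta, h, add_zero] at h2
          exact absurd h2 (by decide)
        · exact h
      have htβ0 : omg (μ q) ((∑ i ∈ β, p i) q) = 0 := by
        rw [htα'] at htα'β
        rcases z2cases (omg (μ q) ((∑ i ∈ β, p i) q)) with h | h
        · exact h
        · rw [h, one_add_one_z2] at htα'β
          exact absurd htα'β (by decide)
      have hα'ne : (α.erase a).Nonempty := by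
        rcases Finset.eq_empty_or_nonempty (α.erase a) with h | h
        · exfalso
          rw [h, Finset.sum_empty, Pi.zero_apply, omg_zero_right] at htα'
          exact absurd htα' (by decide)
        · exact h
      refine ⟨α.erase a, β, hα'ne, hβne, hdisα', hunc, ?_⟩
      apply (prep_disjoint_iff (hrepS' _ hsubα') (hrepS' β hsubβ)).mpr
      intro j
      by_cases hj : j = q
      · subst hj; left; exact hRq _ hsubα'
      · rw [hRoff _ hsubα' j hj, hRoff β hsubβ j hj, htα', htβ0, zero_smul, add_zero,
          one_smul]
        rcases hsupp j with h | h
        · left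
          rw [hαsum, Pi.add_apply] at h
          rw [add_comm]
          exact h
        · right; exact h
    have haαβ : a ∈ α ∪ β := by rw [hαβun]; exact Finset.mem_insert_self a c
    rcases Finset.mem_union.mp haαβ with haα | haβ
    · exact finalcase α β hβne hαβdis hαβun haα hABfwd
    · exact finalcase β α hαne hαβdis.symm (by rw [Finset.union_comm]; exact hαβun) haβ
        (fun j => (hABfwd j).symm)
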